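/- Let E be a finite set of size n, let f : E_d → ℝ be harmonic of degree d, and let J ⊆ E. For 0 ≤ i ≤ d define f^{(i)}(J) = ∑_{Z ∈ E_d, |J ∩ Z| = i} f(Z). Then f^{(i)}(J) = (-1)^{d-i} · C(d, i) · f̃(J), where f̃(J) = ∑_{Z ∈ E_d, Z ⊆ J} f(Z). -/

import Mathlib

open Finset


private lemma exch {ι : Type*} [Fintype ι] [DecidableEq ι]
    (f : Finset ι → ℝ) (A : Finset (Finset ι)) (p : Finset ι → Prop) [DecidablePred p] :
    ∑ Y ∈ A, ∑ Z ∈ Finset.univ.filter (fun Z => p Z ∧ Y ⊆ Z), f Z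
      = ∑ Z ∈ Finset.univ.filter p, ((A.filter (fun Y => Y ⊆ Z)).card : ℝ) * f Z := by
  have h : ∀ Y : Finset ι, ∑ Z ∈ Finset.univ.filter (fun Z => p Z ∧ Y ⊆ Z), f Z
      = ∑ Z ∈ Finset.univ.filter p, if Y ⊆ Z then f Z else 0 := by
    intro Y
    rw [← Finset.filter_filter, Finset.sum_filter]
  simp_rw [h]
  rw [Finset.sum_comm]
  refine Finset.sum_congr rfl fun Z _ => ?_
  rw [Finset.sum_ite, Finset.sum_const, Finset.sum_const_zero, add_zero, nsmul_eq_mul]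

private lemma harm_down {ι : Type*} [Fintype ι] [DecidableEq ι] (d : ℕ) (f : Finset ι → ℝ)
    (hf : ∀ Y : Finset ι, Y.card + 1 = d →
      ∑ Z ∈ Finset.univ.filter (fun Z : Finset ι => Z.card = d ∧ Y ⊆ Z), f Z = 0) :
    ∀ Y : Finset ι, Y.card < d →
      ∑ Z ∈ Finset.univ.filter (fun Z : Finset ι => Z.card = d ∧ Y ⊆ Z), f Z = 0 := by
  suffices H : ∀ m : ℕ, ∀ Y : Finset ι, Y.card < d → d - Y.card = m →
      ∑ Z ∈ Finset.univ.filter (fun Z : Finset ι => Z.card = d ∧ Y ⊆ Z), f Z = 0 by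
    intro Y hY; exact H _ Y hY rfl
  intro m
  induction m using Nat.strong_induction_on with
  | _ m IH =>
    intro Y hY hm
    rcases eq_or_lt_of_le (Nat.succ_le_of_lt hY) with h | h
    · exact hf Y h
    · -- Y.card + 1 < d
      have key := exch f (Finset.univ.filter (fun Y' : Finset ι => Y'.card = Y.card + 1 ∧ Y ⊆ Y'))
        (fun Z => Z.card = d)
      have hL : ∑ Y' ∈ Finset.univ.filter (fun Y' : Finset ι => Y'.card = Y.card + 1 ∧ Y ⊆ Y'),
          ∑ Z ∈ Finset.univ.filter (fun Z => Z.card = d ∧ Y' ⊆ Z), f Z = 0 := by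
        refine Finset.sum_eq_zero fun Y' hY' => ?_
        simp only [Finset.mem_filter] at hY'
        exact IH (d - Y'.card) (by omega) Y' (by omega) rfl
      rw [hL] at key
      -- compute the counts on the RHS
      have hcount : ∀ Z : Finset ι, Y ⊆ Z →
          (((Finset.univ.filter (fun Y' : Finset ι => Y'.card = Y.card + 1 ∧ Y ⊆ Y')).filter
            (fun Y' => Y' ⊆ Z)).card) = Z.card - Y.card := by
        intro Z hYZ
        have hset : ((Finset.univ.filter (fun Y' : Finset ι => Y'.card = Y.card + 1 ∧ Y ⊆ Y')).filter
            (fun Y' => Y' ⊆ Z)) = (Z \ Y).image (fun x => insert x Y) := by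
          ext Y'
          simp only [Finset.mem_filter, Finset.mem_univ, true_and, Finset.mem_image,
            Finset.mem_sdiff]
          constructor
          · rintro ⟨⟨hc, hsub⟩, hsubZ⟩
            have h1 : (Y' \ Y).card = 1 := by
              rw [Finset.card_sdiff_of_subset hsub, hc]; omega
            obtain ⟨x, hx⟩ := Finset.card_eq_one.mp h1
            have hxm : x ∈ Y' \ Y := by rw [hx]; exact Finset.mem_singleton_self x
            rw [Finset.mem_sdiff] at hxm
            refine ⟨x, ⟨hsubZ hxm.1, hxm.2⟩, ?_⟩
            exact (Finset.eq_of_subset_of_card_le (Finset.insert_subset hxm.1 hsub)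
              (by rw [Finset.card_insert_of_notMem hxm.2, hc]))
          · rintro ⟨x, ⟨hxZ, hxY⟩, rfl⟩
            exact ⟨⟨by rw [Finset.card_insert_of_notMem hxY],
              Finset.subset_insert _ _⟩, Finset.insert_subset hxZ hYZ⟩
        rw [hset, Finset.card_image_of_injOn, Finset.card_sdiff_of_subset hYZ]
        intro a ha b hb hab
        simp only [Finset.coe_sdiff, Set.mem_diff, Finset.mem_coe] at ha hb
        have hab' : insert a Y = insert b Y := hab
        have : a ∈ insert b Y := hab' ▸ Finset.mem_insert_self a Y
        rcases Finset.mem_insert.mp this with h' | h'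
        · exact h'
        · exact absurd h' ha.2
      -- restrict the RHS sum to Z containing Y
      have hR : ∑ Z ∈ Finset.univ.filter (fun Z : Finset ι => Z.card = d),
            (((Finset.univ.filter (fun Y' : Finset ι => Y'.card = Y.card + 1 ∧ Y ⊆ Y')).filter
              (fun Y' => Y' ⊆ Z)).card : ℝ) * f Z
          = ((d - Y.card : ℕ) : ℝ) *
            ∑ Z ∈ Finset.univ.filter (fun Z : Finset ι => Z.card = d ∧ Y ⊆ Z), f Z := by
        rw [Finset.mul_sum]
        have hsub : Finset.univ.filter (fun Z : Finset ι => Z.card = d ∧ Y ⊆ Z) ⊆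
            Finset.univ.filter (fun Z : Finset ι => Z.card = d) :=
          Finset.monotone_filter_right _ (fun Z _ hZ => hZ.1)
        have hzero : ∀ Z ∈ Finset.univ.filter (fun Z : Finset ι => Z.card = d),
            Z ∉ Finset.univ.filter (fun Z : Finset ι => Z.card = d ∧ Y ⊆ Z) →
            (((Finset.univ.filter (fun Y' : Finset ι => Y'.card = Y.card + 1 ∧ Y ⊆ Y')).filter
              (fun Y' => Y' ⊆ Z)).card : ℝ) * f Z = 0 := by
          intro Z hZ hZ'
          simp only [Finset.mem_filter, Finset.mem_univ, true_and] at hZ hZ'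
          have hempty : ((Finset.univ.filter (fun Y' : Finset ι => Y'.card = Y.card + 1 ∧ Y ⊆ Y')).filter
              (fun Y' => Y' ⊆ Z)) = ∅ := by
            rw [Finset.filter_eq_empty_iff]
            rintro Y' hY'
            simp only [Finset.mem_filter, Finset.mem_univ, true_and] at hY'
            intro hsubZ
            exact hZ' ⟨hZ, hY'.2.trans hsubZ⟩
          rw [hempty]
          simp
        rw [← Finset.sum_subset hsub hzero]
        refine Finset.sum_congr rfl fun Z hZ => ?_
        simp only [Finset.mem_filter] at hZ
        rw [hcount Z hZ.2.2, hZ.2.1]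
      rw [hR] at key
      have hne : ((d - Y.card : ℕ) : ℝ) ≠ 0 := by
        have : 0 < d - Y.card := by omega
        positivity
      exact (mul_eq_zero.mp key.symm).resolve_left hne

private lemma alt_full (m : ℕ) (hm : 0 < m) :
    ∑ s ∈ Finset.range (m + 1), (-1 : ℝ) ^ (m - s) * (m.choose s : ℝ) = 0 := by
  have h : ∀ s ∈ Finset.range (m + 1), (-1 : ℝ) ^ (m - s) * (m.choose s : ℝ)
      = (-1 : ℝ) ^ m * ((-1 : ℝ) ^ s * (m.choose s : ℝ)) := by
    intro s hs
    rw [Finset.mem_range] at hs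
    have hms : (-1 : ℝ) ^ (m - s) * (-1 : ℝ) ^ s = (-1 : ℝ) ^ m := by
      rw [← pow_add]; congr 1; omega
    have hss : (-1 : ℝ) ^ s * (-1 : ℝ) ^ s = 1 := by
      rw [← pow_add, ← two_mul, pow_mul]; norm_num
    have h3 : (-1 : ℝ) ^ m * (-1 : ℝ) ^ s = (-1 : ℝ) ^ (m - s) := by
      rw [← hms, mul_assoc, hss, mul_one]
    rw [← h3]; ring
  rw [Finset.sum_congr rfl h, ← Finset.mul_sum]
  have := Int.alternating_sum_range_choose (n := m)
  have h2 : ∑ s ∈ Finset.range (m + 1), (-1 : ℝ) ^ s * (m.choose s : ℝ) = 0 := by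
    have := congrArg (fun z : ℤ => (z : ℝ)) this
    push_cast at this
    rw [this, if_neg (by omega)]
  rw [h2, mul_zero]

private lemma alt_sum (n k : ℕ) (hk : k < n) :
    ∑ j ∈ Finset.Ico (k + 1) (n + 1), (j.choose k : ℝ) * (-1 : ℝ) ^ (n - j) * (n.choose j : ℝ)
      = -((-1 : ℝ) ^ (n - k) * (n.choose k : ℝ)) := by
  have key : ∀ j ∈ Finset.Ico (k + 1) (n + 1),
      (j.choose k : ℝ) * (-1 : ℝ) ^ (n - j) * (n.choose j : ℝ)
        = (n.choose k : ℝ) * ((-1 : ℝ) ^ ((n - k) - (j - k)) * ((n - k).choose (j - k) : ℝ)) := by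
    intro j hj
    rw [Finset.mem_Ico] at hj
    have h1 : n.choose j * j.choose k = n.choose k * (n - k).choose (j - k) :=
      Nat.choose_mul (by omega)
    have h2 : (n : ℕ) - j = (n - k) - (j - k) := by omega
    have := congrArg (fun z : ℕ => (z : ℝ)) h1
    push_cast at this
    rw [h2]
    linear_combination (-1 : ℝ) ^ (n - k - (j - k)) * this
  rw [Finset.sum_congr rfl key, ← Finset.mul_sum]
  have hre : ∑ j ∈ Finset.Ico (k + 1) (n + 1),
      ((-1 : ℝ) ^ ((n - k) - (j - k)) * ((n - k).choose (j - k) : ℝ))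
      = ∑ s ∈ Finset.Ico 1 (n - k + 1), ((-1 : ℝ) ^ ((n - k) - s) * ((n - k).choose s : ℝ)) := by
    refine Finset.sum_nbij' (fun j => j - k) (fun s => s + k) ?_ ?_ ?_ ?_ ?_ <;>
      intro x hx <;> simp only [Finset.mem_Ico] at * <;> try omega
  rw [hre]
  have hsplit : ∑ s ∈ Finset.Ico 1 (n - k + 1), ((-1 : ℝ) ^ ((n - k) - s) * ((n - k).choose s : ℝ))
      = (∑ s ∈ Finset.range (n - k + 1), ((-1 : ℝ) ^ ((n - k) - s) * ((n - k).choose s : ℝ)))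
        - (-1 : ℝ) ^ (n - k) := by
    rw [Finset.range_eq_Ico, Finset.sum_eq_sum_Ico_succ_bot (by omega : 0 < n - k + 1)]
    simp
  rw [hsplit, alt_full (n - k) (by omega)]
  ring

private lemma invert (d : ℕ) (F : ℕ → ℝ)
    (h : ∀ k, k < d → ∑ j ∈ Finset.range (d + 1), (j.choose k : ℝ) * F j = 0) :
    ∀ i, i ≤ d → F i = (-1 : ℝ) ^ (d - i) * (d.choose i : ℝ) * F d := by
  suffices H : ∀ m : ℕ, ∀ i, i ≤ d → d - i = m → F i = (-1 : ℝ) ^ (d - i) * (d.choose i : ℝ) * F d by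
    intro i hi; exact H _ i hi rfl
  intro m
  induction m using Nat.strong_induction_on with
  | _ m IH =>
    intro i hi hm
    rcases eq_or_lt_of_le hi with rfl | hlt
    · simp
    · have h0 := h i hlt
      rw [Finset.range_eq_Ico, ← Finset.sum_Ico_consecutive _ (Nat.zero_le i) (by omega : i ≤ d + 1),
        Finset.sum_eq_sum_Ico_succ_bot (by omega : i < d + 1)] at h0
      have hz : ∑ j ∈ Finset.Ico 0 i, (j.choose i : ℝ) * F j = 0 := by
        refine Finset.sum_eq_zero fun j hj => ?_
        rw [Finset.mem_Ico] at hj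
        rw [Nat.choose_eq_zero_of_lt hj.2]; simp
      rw [hz, Nat.choose_self, zero_add, Nat.cast_one, one_mul] at h0
      have hIH : ∀ j ∈ Finset.Ico (i + 1) (d + 1),
          (j.choose i : ℝ) * F j
            = ((j.choose i : ℝ) * (-1 : ℝ) ^ (d - j) * (d.choose j : ℝ)) * F d := by
        intro j hj
        rw [Finset.mem_Ico] at hj
        rw [IH (d - j) (by omega) j (by omega) rfl]
        ring
      rw [Finset.sum_congr rfl hIH, ← Finset.sum_mul, alt_sum d i hlt] at h0
      linarith [h0]

/-- Bachoc's lemma: for `f` harmonic of degree `d`, `J ⊆ E` and `0 ≤ i ≤ d`,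
`f^{(i)}(J) = (-1)^(d-i) C(d,i) f̃(J)`. -/
theorem stmt_3 {ι : Type*} [Fintype ι] [DecidableEq ι] (d : ℕ)
    (f : Finset ι → ℝ)
    (hf : ∀ Y : Finset ι, Y.card + 1 = d →
      ∑ Z ∈ Finset.univ.filter (fun Z : Finset ι => Z.card = d ∧ Y ⊆ Z), f Z = 0)
    (J : Finset ι) (i : ℕ) (hi : i ≤ d) :
    ∑ Z ∈ Finset.univ.filter (fun Z : Finset ι => Z.card = d ∧ (J ∩ Z).card = i), f Z
      = (-1 : ℝ) ^ (d - i) * (d.choose i) *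
        ∑ Z ∈ J.powerset.filter (fun Z : Finset ι => Z.card = d), f Z := by
  set F : ℕ → ℝ := fun j =>
    ∑ Z ∈ Finset.univ.filter (fun Z : Finset ι => Z.card = d ∧ (J ∩ Z).card = j), f Z with hF
  -- the sums T_k vanish for k < d
  have hkey : ∀ k, k < d → ∑ j ∈ Finset.range (d + 1), (j.choose k : ℝ) * F j = 0 := by
    intro k hk
    have hfib : ∑ j ∈ Finset.range (d + 1),
        ∑ Z ∈ (Finset.univ.filter (fun Z : Finset ι => Z.card = d)).filter
          (fun Z => (J ∩ Z).card = j), ((J ∩ Z).card.choose k : ℝ) * f Z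
        = ∑ Z ∈ Finset.univ.filter (fun Z : Finset ι => Z.card = d),
            ((J ∩ Z).card.choose k : ℝ) * f Z := by
      refine Finset.sum_fiberwise_of_maps_to (fun Z hZ => ?_) _
      rw [Finset.mem_filter] at hZ
      rw [Finset.mem_range]
      have := Finset.card_le_card (Finset.inter_subset_right (s₁ := J) (s₂ := Z))
      omega
    have hinner : ∀ j, ∑ Z ∈ (Finset.univ.filter (fun Z : Finset ι => Z.card = d)).filter
          (fun Z => (J ∩ Z).card = j), ((J ∩ Z).card.choose k : ℝ) * f Z
        = (j.choose k : ℝ) * F j := by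
      intro j
      rw [Finset.filter_filter, hF, Finset.mul_sum]
      refine Finset.sum_congr rfl fun Z hZ => ?_
      rw [Finset.mem_filter] at hZ
      rw [hZ.2.2]
    rw [← Finset.sum_congr rfl (fun j _ => hinner j), hfib]
    -- now use exch with A the k-subsets of J
    have hexch := exch f (Finset.univ.filter (fun Y : Finset ι => Y.card = k ∧ Y ⊆ J))
      (fun Z => Z.card = d)
    have hL : ∑ Y ∈ Finset.univ.filter (fun Y : Finset ι => Y.card = k ∧ Y ⊆ J),
        ∑ Z ∈ Finset.univ.filter (fun Z => Z.card = d ∧ Y ⊆ Z), f Z = 0 := by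
      refine Finset.sum_eq_zero fun Y hY => ?_
      rw [Finset.mem_filter] at hY
      exact harm_down d f hf Y (by omega)
    rw [hL] at hexch
    have hset : ∀ Z : Finset ι, (Finset.univ.filter (fun Y : Finset ι => Y.card = k ∧ Y ⊆ J)).filter
        (fun Y => Y ⊆ Z) = (J ∩ Z).powersetCard k := by
      intro Z
      ext Y
      simp only [Finset.mem_filter, Finset.mem_univ, true_and, Finset.mem_powersetCard,
        Finset.subset_inter_iff]
      tauto
    rw [hexch]
    refine Finset.sum_congr rfl fun Z _ => ?_
    rw [hset Z, Finset.card_powersetCard]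
  have hinv := invert d F hkey i hi
  have hFd : F d = ∑ Z ∈ J.powerset.filter (fun Z : Finset ι => Z.card = d), f Z := by
    rw [hF]
    refine Finset.sum_congr ?_ (fun _ _ => rfl)
    ext Z
    simp only [Finset.mem_filter, Finset.mem_univ, true_and, Finset.mem_powerset]
    constructor
    · rintro ⟨h1, h2⟩
      have hZJ : J ∩ Z = Z := Finset.eq_of_subset_of_card_le Finset.inter_subset_right (by omega)
      exact ⟨by rw [← hZJ]; exact Finset.inter_subset_left, h1⟩
    · rintro ⟨h1, h2⟩
      refine ⟨h2, ?_⟩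
      rw [Finset.inter_eq_right.mpr h1, h2]
    -- done
  rw [← hFd]
  exact hinv
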